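/- Let U', g and J⁺_{e^{iφ}} (φ ∈ ℝ) be as in Theorem 1 (the explicit Ricci-flat example). Then the fundamental 2-form ω⁺_{e^{iφ}}(X,Y) = g(X, J⁺_{e^{iφ}}Y) equals the constant-coefficient 2-form i(e^{iφ} dz₂∧dz₁ − e^{−iφ} dz̄₂∧dz̄₁) on U', and this 2-form is closed; hence (U', g, J⁺_{e^{iφ}}) is an almost-Kähler structure for every φ ∈ [0, 2π). -/

import Mathlib

noncomputable section

/-- `w(z₁,z₂) = v − 2z₂z̄₂` where `v = z₁ + z̄₁ = 2 Re z₁`. -/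
def wDef (p : ℂ × ℂ) : ℝ := 2 * p.1.re - 2 * Complex.normSq p.2

/-- The region `U' = {(z₁,z₂) ∈ ℂ² : v − 2z₂z̄₂ > 0}`. -/
def Uprime : Set (ℂ × ℂ) := {p | 0 < wDef p}

/-- `K = log(v − 2z₂z̄₂)`. -/
def KDef (p : ℂ × ℂ) : ℝ := Real.log (wDef p)

/-- `K` as a function of `v` at fixed `z₂`. -/
def KofV (z₂ : ℂ) (v : ℝ) : ℝ := Real.log (v - 2 * Complex.normSq z₂)

/-- `K_v = ∂K/∂v`. -/
def Kv (p : ℂ × ℂ) : ℝ := deriv (KofV p.2) (2 * p.1.re)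

/-- `K_vv = ∂²K/∂v²`. -/
def Kvv (p : ℂ × ℂ) : ℝ := deriv (deriv (KofV p.2)) (2 * p.1.re)

/-- The Wirtinger derivative `∂G/∂z = ½(∂_x G − i ∂_y G)` of `G : ℂ → ℂ` at `c`. -/
def wirtD (G : ℂ → ℂ) (c : ℂ) : ℂ :=
  (deriv (fun x : ℝ => G ((x : ℂ) + (c.im : ℂ) * Complex.I)) c.re -
    Complex.I * deriv (fun y : ℝ => G ((c.re : ℂ) + (y : ℂ) * Complex.I)) c.im) / 2

/-- The Wirtinger derivative `∂G/∂z̄ = ½(∂_x G + i ∂_y G)` of `G : ℂ → ℂ` at `c`. -/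
def wirtDbar (G : ℂ → ℂ) (c : ℂ) : ℂ :=
  (deriv (fun x : ℝ => G ((x : ℂ) + (c.im : ℂ) * Complex.I)) c.re +
    Complex.I * deriv (fun y : ℝ => G ((c.re : ℂ) + (y : ℂ) * Complex.I)) c.im) / 2

/-- `K_{v2} = ∂²K/∂v∂z₂` (Wirtinger derivative in `z₂` of `K_v`). -/
def Kv2 (p : ℂ × ℂ) : ℂ :=
  wirtD (fun z₂ => ((deriv (KofV z₂) (2 * p.1.re) : ℝ) : ℂ)) p.2

/-- `K_{v2̄} = ∂²K/∂v∂z̄₂`. -/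
def Kv2bar (p : ℂ × ℂ) : ℂ :=
  wirtDbar (fun z₂ => ((deriv (KofV z₂) (2 * p.1.re) : ℝ) : ℂ)) p.2

/-- `K_{22̄} = ∂²K/∂z₂∂z̄₂` (at fixed `v`). -/
def K22bar (p : ℂ × ℂ) : ℂ :=
  wirtDbar (fun z₂ =>
    wirtD (fun u => ((Real.log (2 * p.1.re - 2 * Complex.normSq u) : ℝ) : ℂ)) z₂) p.2

/-- The 1-form `dz₁ − 2z̄₂dz₂` evaluated on a real tangent vector `X ∈ ℂ² ≅ ℝ⁴`. -/
def AForm (p : ℂ × ℂ) (X : ℂ × ℂ) : ℂ := X.1 - 2 * starRingEnd ℂ p.2 * X.2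

/-- The explicit Ricci-flat metric
`g = (v − 2z₂z̄₂)^{−1/2}(dz₁ − 2z̄₂dz₂)(dz̄₁ − 2z₂dz̄₂) + 4(v − 2z₂z̄₂)^{1/2} dz₂ dz̄₂`
(with `2αβ = α⊗β + β⊗α`) on real tangent vectors. -/
def gExpl (p : ℂ × ℂ) (X Y : ℂ × ℂ) : ℝ :=
  1 / Real.sqrt (wDef p) * (AForm p X * starRingEnd ℂ (AForm p Y)).re +
    4 * Real.sqrt (wDef p) * (X.2 * starRingEnd ℂ Y.2).re

/-- The almost complex structure
`J⁺_{e^{iφ}} = 2Re{ i e^{iφ} [ (2(v − 2z₂z̄₂)^{1/2})^{−1}(dz₁ − 2z̄₂dz₂) ⊗ (∂_{z̄₂} + 2z₂∂_{z̄₁}) − 2(v − 2z₂z̄₂)^{1/2} dz₂ ⊗ ∂_{z̄₁} ] }`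
as a real endomorphism of the tangent space `ℂ² ≅ ℝ⁴`: a real tangent vector `X`
corresponds to `X.1 ∂_{z₁} + conj X.1 ∂_{z̄₁} + X.2 ∂_{z₂} + conj X.2 ∂_{z̄₂}` in the
complexified tangent space; the components below are the `∂_{z₁}`- and
`∂_{z₂}`-coefficients of `(T + T̄)(X)`. -/
def JExpl (φ : ℝ) (p : ℂ × ℂ) (X : ℂ × ℂ) : ℂ × ℂ :=
  (starRingEnd ℂ (Complex.I * Complex.exp ((φ : ℂ) * Complex.I) *
      (AForm p X / (2 * (Real.sqrt (wDef p) : ℂ)) * (2 * p.2) -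
        2 * (Real.sqrt (wDef p) : ℂ) * X.2)),
   starRingEnd ℂ (Complex.I * Complex.exp ((φ : ℂ) * Complex.I) *
      (AForm p X / (2 * (Real.sqrt (wDef p) : ℂ)))))

/-- The fundamental 2-form `ω⁺_{e^{iφ}}(X,Y) = g(X, J⁺_{e^{iφ}} Y)` of the explicit
example, as a function of the point. -/
def omegaExpl (φ : ℝ) (p : ℂ × ℂ) (X Y : ℂ × ℂ) : ℝ := gExpl p X (JExpl φ p Y)

lemma isOpen_Uprime' : IsOpen Uprime := by
  have hc : Continuous wDef := by
    unfold wDef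
    exact ((continuous_const.mul (Complex.continuous_re.comp continuous_fst)).sub
      (continuous_const.mul (Complex.continuous_normSq.comp continuous_snd)))
  exact isOpen_lt continuous_const hc

lemma conj_AForm_JExpl (φ : ℝ) (p : ℂ × ℂ) (hs' : ((Real.sqrt (wDef p) : ℝ) : ℂ) ≠ 0)
    (Y : ℂ × ℂ) :
    starRingEnd ℂ (AForm p (JExpl φ p Y)) =
      -2 * Complex.I * Complex.exp ((φ : ℂ) * Complex.I)
        * (Real.sqrt (wDef p) : ℂ) * Y.2 := by
  simp only [AForm, JExpl, map_mul, map_div₀, map_sub, map_neg, map_ofNat,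
    Complex.conj_conj, Complex.conj_I]
  field_simp
  ring

lemma conj_JExpl_snd (φ : ℝ) (p : ℂ × ℂ) (Y : ℂ × ℂ) :
    starRingEnd ℂ ((JExpl φ p Y).2) =
      Complex.I * Complex.exp ((φ : ℂ) * Complex.I) *
        (AForm p Y / (2 * (Real.sqrt (wDef p) : ℂ))) := by
  simp [JExpl]

lemma omegaExpl_key (φ : ℝ) (p : ℂ × ℂ) (hp : 0 < wDef p) (X Y : ℂ × ℂ) :
    ((omegaExpl φ p X Y : ℝ) : ℂ) =
        Complex.I * (Complex.exp ((φ : ℂ) * Complex.I) * (X.2 * Y.1 - X.1 * Y.2) -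
          Complex.exp (-((φ : ℂ) * Complex.I)) *
            (starRingEnd ℂ X.2 * starRingEnd ℂ Y.1 -
              starRingEnd ℂ X.1 * starRingEnd ℂ Y.2)) := by
  have hs : (0:ℝ) < Real.sqrt (wDef p) := Real.sqrt_pos.2 hp
  have hs' : ((Real.sqrt (wDef p) : ℝ) : ℂ) ≠ 0 := by exact_mod_cast hs.ne'
  have hre : ∀ z : ℂ, ((z.re : ℝ) : ℂ) = (z + starRingEnd ℂ z) / 2 := by
    intro z; rw [Complex.add_conj]; push_cast; ring
  have hec : starRingEnd ℂ (Complex.exp ((φ : ℂ) * Complex.I)) =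
      Complex.exp (-((φ : ℂ) * Complex.I)) := by
    rw [← Complex.exp_conj, map_mul, Complex.conj_ofReal, Complex.conj_I]
    ring_nf
  unfold omegaExpl gExpl
  rw [conj_AForm_JExpl φ p hs', conj_JExpl_snd φ p]
  push_cast
  rw [hre, hre]
  simp only [AForm, map_mul, map_div₀, map_sub, map_neg, map_ofNat,
    Complex.conj_conj, Complex.conj_I, Complex.conj_ofReal, hec]
  field_simp
  ring

/-- On `U'`, the fundamental 2-form `ω⁺_{e^{iφ}}` equals the
constant-coefficient 2-form `i(e^{iφ} dz₂∧dz₁ − e^{−iφ} dz̄₂∧dz̄₁)`, and this form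
is closed (the cyclic sum of directional derivatives of its coefficients vanishes);
hence `(U', g, J⁺_{e^{iφ}})` is almost-Kähler for every `φ`. -/
theorem omegaExpl_constant_closed (φ : ℝ) :
    (∀ p ∈ Uprime, ∀ X Y : ℂ × ℂ,
      ((omegaExpl φ p X Y : ℝ) : ℂ) =
        Complex.I * (Complex.exp ((φ : ℂ) * Complex.I) * (X.2 * Y.1 - X.1 * Y.2) -
          Complex.exp (-((φ : ℂ) * Complex.I)) *
            (starRingEnd ℂ X.2 * starRingEnd ℂ Y.1 -
              starRingEnd ℂ X.1 * starRingEnd ℂ Y.2))) ∧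
    (∀ p ∈ Uprime, ∀ X Y Z : ℂ × ℂ,
      fderiv ℝ (fun q => omegaExpl φ q Y Z) p X +
        fderiv ℝ (fun q => omegaExpl φ q Z X) p Y +
        fderiv ℝ (fun q => omegaExpl φ q X Y) p Z = 0) := by
  constructor
  · intro p hp X Y
    exact omegaExpl_key φ p hp X Y
  · intro p hp X Y Z
    have h : ∀ A B : ℂ × ℂ, fderiv ℝ (fun q => omegaExpl φ q A B) p = 0 := by
      intro A B
      have hev : (fun q => omegaExpl φ q A B) =ᶠ[nhds p]
          (fun _ => (Complex.I * (Complex.exp ((φ : ℂ) * Complex.I) * (A.2 * B.1 - A.1 * B.2) -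
            Complex.exp (-((φ : ℂ) * Complex.I)) *
              (starRingEnd ℂ A.2 * starRingEnd ℂ B.1 -
                starRingEnd ℂ A.1 * starRingEnd ℂ B.2))).re) := by
        filter_upwards [isOpen_Uprime'.mem_nhds hp] with q hq
        have h2 := congrArg Complex.re (omegaExpl_key φ q hq A B)
        simpa using h2
      rw [hev.fderiv_eq, fderiv_fun_const]
      rfl
    rw [h Y Z, h Z X, h X Y]
    simp
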